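/- Key inequality for the utilitarian PoC of trees: let T be a tree on m vertices, and for each vertex v let Δ_v ∈ ℝ with Σ_v Δ_v = 0 and Σ_v |Δ_v| ≤ 2. Let Δ be the maximum of |Σ_{v∈T'} Δ_v| over all subtrees T' such that both T' and its complement induce connected subgraphs (equivalently, over all 'halves' obtained by deleting one edge). Then Δ ≥ ( (m/2)·Σ_v |Δ_v| − (m−2) ) / (2m − 2). In particular, |Δ_v| ≤ deg(v)·Δ for every vertex v (by splitting around v into its deg(v) subtrees and the triangle inequality). -/

import Mathlib

open SimpleGraph Finset

private def delVert {V : Type*} (T : SimpleGraph V) (v : V) : SimpleGraph V where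
  Adj a b := T.Adj a b ∧ a ≠ v ∧ b ≠ v
  symm := ⟨fun a b h => ⟨h.1.symm, h.2.2, h.2.1⟩⟩
  loopless := ⟨fun a h => T.loopless.irrefl a h.1⟩

private lemma delVert_le {V : Type*} (T : SimpleGraph V) (v : V) : delVert T v ≤ T :=
  fun _ _ h => h.1

private lemma delVert_support_ne {V : Type*} (T : SimpleGraph V) (v : V) {a b : V}
    (p : (delVert T v).Walk a b) (ha : a ≠ v) : ∀ x ∈ p.support, x ≠ v := by
  induction p with
  | nil => simpa using ha
  | cons h p ih =>
    intro x hx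
    rw [SimpleGraph.Walk.support_cons, List.mem_cons] at hx
    rcases hx with rfl | hx
    · exact ha
    · exact ih h.2.2 x hx

private lemma walk_transfer {V : Type*} (T : SimpleGraph V) (v : V) {a b : V} (p : T.Walk a b)
    (hv : v ∉ p.support) : ∃ q : (delVert T v).Walk a b, q.support = p.support := by
  have he : ∀ e ∈ p.edges, e ∈ (delVert T v).edgeSet := by
    intro e he
    induction e using Sym2.ind with
    | _ x y =>
      refine ⟨p.edges_subset_edgeSet he, ?_, ?_⟩
      · exact fun h => hv (h ▸ p.fst_mem_support_of_mem_edges he)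
      · exact fun h => hv (h ▸ p.snd_mem_support_of_mem_edges he)
  exact ⟨p.transfer _ he, p.support_transfer he⟩

private lemma reachable_of_mem_support {V : Type*} [DecidableEq V] {G : SimpleGraph V} {a b : V}
    (p : G.Walk a b) : ∀ x ∈ p.support, G.Reachable a x :=
  fun x hx => ⟨p.takeUntil x hx⟩

/-- the not-v vertex is isolated-free: v is reachable only from itself in `delVert`. -/
private lemma not_reachable_v {V : Type*} {T : SimpleGraph V} {v u : V} (huv : u ≠ v)
    (r : (delVert T v).Reachable v u) : False := by
  obtain ⟨p⟩ := r
  cases p with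
  | nil => exact huv rfl
  | cons h p => exact h.2.1 rfl

private lemma key_deg {V : Type*} [Fintype V] [DecidableEq V]
    (T : SimpleGraph V) [DecidableRel T.Adj] (hT : T.IsTree)
    (Δv : V → ℝ) (hsum : ∑ v, Δv v = 0)
    (D : ℝ)
    (hub : ∀ s : Finset V, s.Nonempty → sᶜ.Nonempty →
      (T.induce (s : Set V)).Connected → (T.induce ((sᶜ : Finset V) : Set V)).Connected →
      |∑ v ∈ s, Δv v| ≤ D) (v : V) :
    |Δv v| ≤ (T.degree v : ℝ) * D := by
  classical
  set G := delVert T v with hG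
  set F : V → Finset V := fun u => univ.filter (fun w => G.Reachable w u) with hF
  have memF : ∀ u w, w ∈ F u ↔ G.Reachable w u := by
    intro u w; simp [hF]
  set N := T.neighborFinset v with hN
  -- basic membership facts
  have hvnot : ∀ u, u ≠ v → v ∉ F u := by
    intro u hu hmem
    exact not_reachable_v hu ((memF u v).1 hmem)
  have hself : ∀ u ∈ N, u ∈ F u := by
    intro u hu
    exact (memF u u).2 (Reachable.refl u)
  have huv : ∀ u ∈ N, u ≠ v := by
    intro u hu
    rw [hN, T.mem_neighborFinset] at hu
    exact fun h => T.loopless.irrefl v (h ▸ hu)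
  -- support elements of F u are ≠ v (elements of each part avoid v)
  have hmemne : ∀ u ∈ N, ∀ w ∈ F u, w ≠ v := by
    intro u hu w hw h
    exact hvnot u (huv u hu) (h ▸ hw)
  -- every w ≠ v lies in F u for some neighbor u, via the tree path from v to w
  have hcover : ∀ w, w ≠ v → ∃ u ∈ N, w ∈ F u := by
    intro w hw
    obtain ⟨p⟩ := hT.isConnected.preconnected v w
    obtain ⟨q, hpath⟩ := p.toPath
    cases q with
    | nil => exact absurd rfl hw.symm
    | @cons _ u _ h q' =>
      rw [SimpleGraph.Walk.cons_isPath_iff] at hpath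
      obtain ⟨q'', hq''⟩ := walk_transfer T v q' hpath.2
      refine ⟨u, ?_, (memF u w).2 ⟨q''.reverse⟩⟩
      rw [hN, T.mem_neighborFinset]; exact h
  -- distinct neighbors give disjoint parts
  have hdisj : (N : Set V).PairwiseDisjoint F := by
    intro u hu u' hu' hne
    rw [Finset.mem_coe] at hu hu'
    simp only [Function.onFun]
    rw [Finset.disjoint_left]
    intro w hw hw'
    have r : G.Reachable u u' := ((memF u w).1 hw).symm.trans ((memF u' w).1 hw')
    obtain ⟨p⟩ := r
    -- build a T-path from u to u' avoiding v
    have h1 : u ≠ v := huv u hu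
    have hvsup : v ∉ p.support := fun hx => delVert_support_ne T v p h1 v hx rfl
    set pT : T.Walk u u' := p.mapLe (delVert_le T v) with hpT
    have hsub := pT.support_toPath_subset
    have hvP : v ∉ (pT.toPath : T.Walk u u').support := by
      intro hx
      have := hsub hx
      rw [hpT] at this
      simp only [SimpleGraph.Walk.mapLe, SimpleGraph.Walk.support_map] at this
      rw [List.mem_map] at this
      obtain ⟨x, hx', hxx⟩ := this
      have hxv : x = v := by simpa using hxx
      exact hvsup (hxv ▸ hx')
    -- the explicit 2-step path u - v - u'
    have hadj_u : T.Adj u v := by rw [hN, T.mem_neighborFinset] at hu; exact hu.symm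
    have hadj_u' : T.Adj v u' := by rw [hN, T.mem_neighborFinset] at hu'; exact hu'
    set p2 : T.Walk u u' := SimpleGraph.Walk.cons hadj_u (SimpleGraph.Walk.cons hadj_u' SimpleGraph.Walk.nil) with hp2
    have hp2path : p2.IsPath := by
      rw [hp2]
      simp [SimpleGraph.Walk.isPath_def, hne, h1, (huv u' hu').symm, Ne.symm (huv u' hu')]
    have := hT.existsUnique_path u u'
    obtain ⟨q, -, hquniq⟩ := this
    have e1 := hquniq _ pT.toPath.2
    have e2 := hquniq _ hp2path
    rw [← e2] at e1
    apply hvP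
    rw [e1, hp2]
    simp
  -- each part induces a connected subgraph of T
  have hconn : ∀ u ∈ N, (T.induce ((F u : Finset V) : Set V)).Connected := by
    intro u hu
    apply SimpleGraph.induce_connected_of_patches u (by simpa using hself u hu)
    intro w hw
    rw [Finset.mem_coe, memF] at hw
    obtain ⟨r⟩ := hw.symm
    have hsub : {x | x ∈ r.support} ⊆ ((F u : Finset V) : Set V) := by
      intro x hx
      rw [Finset.mem_coe, memF]
      exact (reachable_of_mem_support r x hx).symm
    have hle : G.induce {x | x ∈ r.support} ≤ T.induce {x | x ∈ r.support} := by
      intro a b hab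
      exact delVert_le T v hab
    exact ⟨{x | x ∈ r.support}, hsub, r.start_mem_support, r.end_mem_support,
      ((r.connected_induce_support).preconnected _ _).mono hle⟩
  -- the complement of each part induces a connected subgraph of T
  have hconnc : ∀ u ∈ N, (T.induce (((F u)ᶜ : Finset V) : Set V)).Connected := by
    intro u hu
    have hvmem : v ∈ ((F u)ᶜ : Finset V) := Finset.mem_compl.2 (hvnot u (huv u hu))
    apply SimpleGraph.induce_connected_of_patches v (Finset.mem_coe.2 hvmem)
    intro w hw
    by_cases hwv : w = v
    · subst hwv
      exact ⟨{w}, by simpa using Finset.mem_coe.2 hvmem, rfl, rfl, Reachable.refl _⟩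
    · rw [Finset.mem_coe, Finset.mem_compl] at hw
      obtain ⟨p⟩ := hT.isConnected.preconnected v w
      obtain ⟨q, hpath⟩ := p.toPath
      cases q with
      | nil => exact absurd rfl hwv
      | @cons _ u'' _ h q' =>
        rw [SimpleGraph.Walk.cons_isPath_iff] at hpath
        obtain ⟨q'', hq''⟩ := walk_transfer T v q' hpath.2
        have hsub : {x | x ∈ (SimpleGraph.Walk.cons h q').support}
            ⊆ (((F u)ᶜ : Finset V) : Set V) := by
          intro x hx
          rw [Set.mem_setOf_eq, SimpleGraph.Walk.support_cons, List.mem_cons] at hx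
          rw [Finset.mem_coe, Finset.mem_compl]
          rcases hx with rfl | hx
          · exact hvnot u (huv u hu)
          · intro hxFu
            apply hw
            rw [memF]
            have h1 : G.Reachable u'' x := reachable_of_mem_support q'' x (by rw [hq'']; exact hx)
            have h2 : G.Reachable u'' w := ⟨q''⟩
            exact (h2.symm.trans h1).trans ((memF u x).1 hxFu)
        exact ⟨{x | x ∈ (SimpleGraph.Walk.cons h q').support}, hsub,
          (SimpleGraph.Walk.cons h q').start_mem_support,
          (SimpleGraph.Walk.cons h q').end_mem_support,
          ((SimpleGraph.Walk.cons h q').connected_induce_support).preconnected _ _⟩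
  -- the parts partition `univ.erase v`
  have hpart : N.biUnion F = univ.erase v := by
    ext w
    simp only [Finset.mem_biUnion, Finset.mem_erase, Finset.mem_univ, and_true]
    constructor
    · rintro ⟨u, hu, hw⟩; exact hmemne u hu w hw
    · intro hw; exact hcover w hw
  have hsum2 : Δv v + ∑ u ∈ N, ∑ w ∈ F u, Δv w = 0 := by
    rw [← Finset.sum_biUnion hdisj, hpart, Finset.add_sum_erase univ Δv (Finset.mem_univ v)]
    exact hsum
  have habs' : |Δv v| = |∑ u ∈ N, ∑ w ∈ F u, Δv w| := by
    have : Δv v = -(∑ u ∈ N, ∑ w ∈ F u, Δv w) := by linarith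
    rw [this, abs_neg]
  have hdeg : (N.card : ℝ) = (T.degree v : ℝ) := by
    rw [hN]; rfl
  calc |Δv v| = |∑ u ∈ N, ∑ w ∈ F u, Δv w| := habs'
    _ ≤ ∑ u ∈ N, |∑ w ∈ F u, Δv w| := Finset.abs_sum_le_sum_abs _ _
    _ ≤ ∑ _u ∈ N, D := by
        refine Finset.sum_le_sum (fun u hu => ?_)
        exact hub (F u) ⟨u, hself u hu⟩ ⟨v, Finset.mem_compl.2 (hvnot u (huv u hu))⟩
          (hconn u hu) (hconnc u hu)
    _ = (N.card : ℝ) * D := by rw [Finset.sum_const, nsmul_eq_mul]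
    _ = (T.degree v : ℝ) * D := by rw [hdeg]

/-- key inequality for the utilitarian PoC of trees: let `T` be a tree on `m ≥ 2`
vertices and `Δv : V → ℝ` with `∑ Δv = 0` and `∑ |Δv| ≤ 2`.  If `D` bounds `|∑_{v ∈ s} Δv v|`
for every nonempty `s` with nonempty complement such that both `s` and its complement induce
connected subgraphs (the two halves obtained by deleting one edge), then
`D ≥ ((m/2)·∑|Δv| − (m−2)) / (2m−2)`, and moreover `|Δv v| ≤ deg(v)·D` for every vertex. -/
theorem tree_util_poc_key_inequality {V : Type*} [Fintype V] [DecidableEq V]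
    (T : SimpleGraph V) [DecidableRel T.Adj] (hT : T.IsTree) (m : ℕ)
    (hm : Fintype.card V = m) (hm2 : 2 ≤ m)
    (Δv : V → ℝ) (hsum : ∑ v, Δv v = 0) (habs : ∑ v, |Δv v| ≤ 2)
    (D : ℝ)
    (hub : ∀ s : Finset V, s.Nonempty → sᶜ.Nonempty →
      (T.induce (s : Set V)).Connected → (T.induce ((sᶜ : Finset V) : Set V)).Connected →
      |∑ v ∈ s, Δv v| ≤ D) :
    ((m : ℝ) / 2 * ∑ v, |Δv v| - ((m : ℝ) - 2)) / (2 * (m : ℝ) - 2) ≤ D ∧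
    ∀ v : V, |Δv v| ≤ (T.degree v : ℝ) * D := by
  have h2 : ∀ v : V, |Δv v| ≤ (T.degree v : ℝ) * D := key_deg T hT Δv hsum D hub
  refine ⟨?_, h2⟩
  -- handshake: ∑ deg = 2 * (m - 1)
  have hk : T.edgeFinset.card + 1 = m := by rw [← hm]; exact hT.card_edgeFinset
  have hhs : ∑ v : V, T.degree v = 2 * T.edgeFinset.card :=
    T.sum_degrees_eq_twice_card_edges
  set S : ℝ := ∑ v, |Δv v| with hS
  have hS0 : 0 ≤ S := Finset.sum_nonneg (fun v _ => abs_nonneg _)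
  have hSle : S ≤ (2 * (m : ℝ) - 2) * D := by
    have h3 : S ≤ ∑ v : V, (T.degree v : ℝ) * D := Finset.sum_le_sum (fun v _ => h2 v)
    have h4 : ∑ v : V, (T.degree v : ℝ) * D = ((∑ v : V, T.degree v : ℕ) : ℝ) * D := by
      rw [← Finset.sum_mul]; push_cast; ring
    have h5 : ((∑ v : V, T.degree v : ℕ) : ℝ) = 2 * (m : ℝ) - 2 := by
      rw [hhs]
      have : (T.edgeFinset.card : ℝ) = (m : ℝ) - 1 := by
        have := congrArg (fun n : ℕ => (n : ℝ)) hk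
        push_cast at this
        linarith
      push_cast
      linarith
    rw [h4, h5] at h3
    exact h3
  have hmR : (2 : ℝ) ≤ (m : ℝ) := by exact_mod_cast hm2
  have hden : (0 : ℝ) < 2 * (m : ℝ) - 2 := by linarith
  rw [div_le_iff₀ hden]
  nlinarith [mul_nonneg (sub_nonneg.2 hmR) (sub_nonneg.2 habs)]
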